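/- Let d ≥ 1 and let E = {E_i}_{i=1}^{d²} be an unbiased MIC (tr E_i = 1/d for all i) for d×d complex matrices with Gram matrix G. Then: (i) the matrix dG is doubly stochastic (its entries are nonnegative and every row and every column sums to 1); (ii) the maximal eigenvalue of G equals 1/d; and (iii) tr G ≤ 1. -/

import Mathlib

open Matrix BigOperators
open scoped ComplexOrder Kronecker

/-- A measure basis: a linearly independent family of `d²` Hermitian `d×d` complex
matrices summing to the identity, with nonnegative traces. -/
def IsMeasureBasis {d : ℕ} (L : Fin (d ^ 2) → Matrix (Fin d) (Fin d) ℂ) : Prop :=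
  (∀ i, (L i).IsHermitian) ∧ LinearIndependent ℝ L ∧ (∑ i, L i) = 1 ∧ ∀ i, 0 ≤ ((L i).trace).re

/-- A Wigner basis: an orthogonal measure basis. -/
def IsWignerBasis {d : ℕ} (L : Fin (d ^ 2) → Matrix (Fin d) (Fin d) ℂ) : Prop :=
  IsMeasureBasis L ∧ ∀ i j, i ≠ j → (L i * L j).trace = 0

/-- The rescaled frame operator `S_L(X) = ∑ⱼ (tr(X Lⱼ)/lⱼ) Lⱼ`. -/
noncomputable def rsFrameOp {n : Type*} [Fintype n] {m : Type*} [Fintype m] [DecidableEq m]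
    (L : n → Matrix m m ℂ) (X : Matrix m m ℂ) : Matrix m m ℂ :=
  ∑ j, (((X * L j).trace) / ((L j).trace)) • L j

/-- A map on matrices that is ℝ-linear, Hermiticity-preserving, self-adjoint with respect to
the Hilbert–Schmidt inner product on Hermitian matrices, and positive. -/
def IsPosSelfAdjMap {m : Type*} [Fintype m]
    (T : Matrix m m ℂ → Matrix m m ℂ) : Prop :=
  IsLinearMap ℝ T ∧ (∀ X, X.IsHermitian → (T X).IsHermitian) ∧
  (∀ X Y, X.IsHermitian → Y.IsHermitian → (T X * Y).trace = (X * T Y).trace) ∧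
  (∀ X, X.IsHermitian → 0 ≤ ((X * T X).trace).re)

/-- `T` is the (unique) positive self-adjoint inverse square root of the rescaled frame
operator of `L`, i.e. `S_L ∘ T ∘ T = id` on Hermitian matrices; `PW(L) i = T (L i)`. -/
def IsInvSqrtOfFrameOp {n : Type*} [Fintype n] {m : Type*} [Fintype m] [DecidableEq m]
    (L : n → Matrix m m ℂ) (T : Matrix m m ℂ → Matrix m m ℂ) : Prop :=
  IsPosSelfAdjMap T ∧ ∀ X : Matrix m m ℂ, X.IsHermitian → rsFrameOp L (T (T X)) = X

lemma psd_diag_nonneg {n : Type*} [Fintype n] [DecidableEq n] {M : Matrix n n ℂ}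
    (hM : M.PosSemidef) (i : n) : 0 ≤ M i i := by
  exact hM.diag_nonneg

lemma psd_trace_nonneg {n : Type*} [Fintype n] [DecidableEq n] {M : Matrix n n ℂ}
    (hM : M.PosSemidef) : 0 ≤ M.trace :=
  Finset.sum_nonneg fun i _ => psd_diag_nonneg hM i

lemma psd_mul_trace_re_nonneg {n : Type*} [Fintype n] [DecidableEq n]
    {A B : Matrix n n ℂ} (hA : A.PosSemidef) (hB : B.PosSemidef) :
    0 ≤ ((A * B).trace).re := by
  obtain ⟨S, hS⟩ : ∃ S : Matrix n n ℂ, B = star S * S :=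
    by
      letI : PartialOrder (Matrix n n ℂ) := Matrix.instPartialOrder
      haveI : StarOrderedRing (Matrix n n ℂ) := Matrix.instStarOrderedRing
      haveI : NonnegSpectrumClass ℝ (Matrix n n ℂ) := Matrix.instNonnegSpectrumClass
      exact CStarAlgebra.nonneg_iff_eq_star_mul_self.mp hB.nonneg
  have h1 : A * B = A * Sᴴ * S := by rw [hS, ← mul_assoc]; rfl
  have h2 : (A * Sᴴ * S).trace = (S * A * Sᴴ).trace := by
    rw [trace_mul_comm, ← mul_assoc]
  have h3 : (0 : ℂ) ≤ (S * A * Sᴴ).trace := psd_trace_nonneg (hA.mul_mul_conjTranspose_same S)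
  rw [h1, h2]
  exact (Complex.le_def.mp h3).1

lemma unitary_conj_trace {n : Type*} [Fintype n] [DecidableEq n] (U D : Matrix n n ℂ)
    (hUU : star U * U = 1) : (U * D * star U).trace = D.trace := by
  rw [trace_mul_comm, ← mul_assoc, hUU, one_mul]

lemma unitary_conj_sq {n : Type*} [Fintype n] [DecidableEq n] (U D : Matrix n n ℂ)
    (hUU : star U * U = 1) : (U * D * star U) * (U * D * star U) = U * (D * D) * star U := by
  simp only [mul_assoc]
  rw [← mul_assoc (star U) U, hUU, one_mul]

lemma psd_trace_sq_le {n : Type*} [Fintype n] [DecidableEq n]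
    {A : Matrix n n ℂ} (hA : A.PosSemidef) :
    ((A * A).trace).re ≤ ((A.trace).re) ^ 2 := by
  have hH := hA.1
  have hUU : star (hH.eigenvectorUnitary : Matrix n n ℂ) * (hH.eigenvectorUnitary : Matrix n n ℂ)
      = 1 := Unitary.coe_star_mul_self hH.eigenvectorUnitary
  have htr : A.trace = ∑ i, (hH.eigenvalues i : ℂ) := by
    conv_lhs => rw [hH.spectral_theorem, Unitary.conjStarAlgAut_apply]
    rw [unitary_conj_trace _ _ hUU, trace_diagonal]
    rfl
  have htr2 : (A * A).trace = ∑ i, (hH.eigenvalues i : ℂ) ^ 2 := by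
    conv_lhs => rw [hH.spectral_theorem, Unitary.conjStarAlgAut_apply]
    rw [unitary_conj_sq _ _ hUU, unitary_conj_trace _ _ hUU, diagonal_mul_diagonal,
      trace_diagonal]
    simp [sq]
  rw [htr, htr2]
  have h1 : (∑ i, (hH.eigenvalues i : ℂ) ^ 2).re = ∑ i, (hH.eigenvalues i) ^ 2 := by
    simp [Complex.re_sum, ← Complex.ofReal_pow]
  have h2 : (∑ i, (hH.eigenvalues i : ℂ)).re = ∑ i, hH.eigenvalues i := by
    simp [Complex.re_sum]
  rw [h1, h2]
  exact Finset.sum_sq_le_sq_sum_of_nonneg fun i _ => hA.eigenvalues_nonneg i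

/-- for an unbiased MIC `E` with Gram matrix `G`: `dG` is doubly
stochastic, the maximal eigenvalue of `G` is `1/d`, and `tr G ≤ 1`. -/
theorem unbiased_mic_gram_properties {d : ℕ} [NeZero d]
    (E : Fin (d ^ 2) → Matrix (Fin d) (Fin d) ℂ)
    (hE : IsMeasureBasis E) (hEpsd : ∀ i, (E i).PosSemidef)
    (hEunb : ∀ i, (E i).trace = ((d : ℂ))⁻¹)
    (G : Matrix (Fin (d ^ 2)) (Fin (d ^ 2)) ℝ)
    (hG : ∀ i j, G i j = ((E i * E j).trace).re)
    (hGh : G.IsHermitian) :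
    (∀ i j, 0 ≤ (d : ℝ) * G i j) ∧
    (∀ i, ∑ j, (d : ℝ) * G i j = 1) ∧
    (∀ j, ∑ i, (d : ℝ) * G i j = 1) ∧
    (Finset.univ.sup' Finset.univ_nonempty hGh.eigenvalues = (d : ℝ)⁻¹) ∧
    G.trace ≤ 1 := by
  haveI : NeZero (d ^ 2) := ⟨pow_ne_zero 2 (NeZero.ne d)⟩
  obtain ⟨hHerm, hLI, hsum, htrnn⟩ := hE
  have hd0 : (0:ℝ) < d := Nat.cast_pos.mpr (Nat.pos_of_ne_zero (NeZero.ne d))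
  have hre : ((d:ℂ)⁻¹).re = (d:ℝ)⁻¹ := by
    have : ((d:ℂ))⁻¹ = (((d:ℝ)⁻¹ : ℝ) : ℂ) := by push_cast; ring
    rw [this, Complex.ofReal_re]
  have hnn : ∀ i j, 0 ≤ G i j := fun i j => by
    rw [hG]; exact psd_mul_trace_re_nonneg (hEpsd i) (hEpsd j)
  have hrow : ∀ i, ∑ j, G i j = (d:ℝ)⁻¹ := by
    intro i
    have h1 : ((E i * ∑ j, E j).trace).re = ∑ j, G i j := by
      rw [Finset.mul_sum, trace_sum, Complex.re_sum]
      exact Finset.sum_congr rfl fun j _ => (hG i j).symm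
    rw [← h1, hsum, mul_one, hEunb i, hre]
  have hsymm : ∀ i j, G j i = G i j := fun i j => by
    rw [hG, hG, trace_mul_comm]
  have hcol : ∀ j, ∑ i, G i j = (d:ℝ)⁻¹ := fun j => by
    rw [Finset.sum_congr rfl fun i _ => hsymm j i]
    exact hrow j
  have hle : ∀ i, hGh.eigenvalues i ≤ (d:ℝ)⁻¹ := by
    intro i
    have hGv := hGh.mulVec_eigenvectorBasis i
    set v : Fin (d^2) → ℝ := ⇑(hGh.eigenvectorBasis i) with hv
    have hvne : v ≠ 0 := by
      intro h
      exact hGh.eigenvectorBasis.orthonormal.ne_zero i (by ext k; exact congrFun h k)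
    obtain ⟨k, -, hk⟩ := Finset.exists_max_image Finset.univ (fun j => |v j|) Finset.univ_nonempty
    have hkpos : 0 < |v k| := by
      obtain ⟨j, hj⟩ := Function.ne_iff.mp hvne
      exact lt_of_lt_of_le (abs_pos.mpr hj) (hk j (Finset.mem_univ j))
    have h2 : hGh.eigenvalues i * v k = ∑ j, G k j * v j := by
      have h := congrFun hGv k
      simp only [Pi.smul_apply, smul_eq_mul] at h
      rw [← h]
      simp [mulVec, dotProduct]
    have h3 : |hGh.eigenvalues i| * |v k| ≤ (d:ℝ)⁻¹ * |v k| := by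
      calc |hGh.eigenvalues i| * |v k| = |∑ j, G k j * v j| := by rw [← abs_mul, h2]
      _ ≤ ∑ j, |G k j * v j| := Finset.abs_sum_le_sum_abs _ _
      _ = ∑ j, G k j * |v j| := Finset.sum_congr rfl fun j _ => by
            rw [abs_mul, abs_of_nonneg (hnn k j)]
      _ ≤ ∑ j, G k j * |v k| := Finset.sum_le_sum fun j _ =>
            mul_le_mul_of_nonneg_left (hk j (Finset.mem_univ j)) (hnn k j)
      _ = (d:ℝ)⁻¹ * |v k| := by rw [← Finset.sum_mul, hrow k]
    exact le_trans (le_abs_self _) (le_of_mul_le_mul_right h3 hkpos)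
  refine ⟨fun i j => mul_nonneg hd0.le (hnn i j), ?_, ?_, ?_, ?_⟩
  · intro i; rw [← Finset.mul_sum, hrow i, mul_inv_cancel₀ hd0.ne']
  · intro j; rw [← Finset.mul_sum, hcol j, mul_inv_cancel₀ hd0.ne']
  · refine le_antisymm (Finset.sup'_le _ _ fun i _ => hle i) ?_
    set s := Finset.univ.sup' Finset.univ_nonempty hGh.eigenvalues with hs
    have hls : ∀ i, hGh.eigenvalues i ≤ s := fun i => Finset.le_sup' _ (Finset.mem_univ i)
    set w : Fin (d^2) → ℝ := fun _ => 1 with hw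
    have hUU : star (hGh.eigenvectorUnitary : Matrix (Fin (d^2)) (Fin (d^2)) ℝ) * (hGh.eigenvectorUnitary : Matrix (Fin (d^2)) (Fin (d^2)) ℝ)
        = 1 := Unitary.coe_star_mul_self hGh.eigenvectorUnitary
    have hUU' : (hGh.eigenvectorUnitary : Matrix (Fin (d^2)) (Fin (d^2)) ℝ) * star (hGh.eigenvectorUnitary : Matrix (Fin (d^2)) (Fin (d^2)) ℝ)
        = 1 := mem_unitaryGroup_iff.mp hGh.eigenvectorUnitary.2
    set c : Fin (d^2) → ℝ := w ᵥ* (hGh.eigenvectorUnitary : Matrix (Fin (d^2)) (Fin (d^2)) ℝ) with hc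
    have hstar : star (hGh.eigenvectorUnitary : Matrix (Fin (d^2)) (Fin (d^2)) ℝ) *ᵥ w = c := by
      ext i
      simp [mulVec, vecMul, dotProduct, hc, mul_comm]
    have hq1 : w ⬝ᵥ (G *ᵥ w) = ((d^2 : ℕ) : ℝ) * (d:ℝ)⁻¹ := by
      have hgv : ∀ i, (G *ᵥ w) i = (d:ℝ)⁻¹ := fun i => by
        simp [mulVec, dotProduct, hw, hrow i]
      simp only [dotProduct, hgv]
      simp [hw, Finset.sum_const, Finset.card_univ, Fintype.card_fin,
        nsmul_eq_mul]
    have hq2 : w ⬝ᵥ (G *ᵥ w) = ∑ i, hGh.eigenvalues i * (c i)^2 := by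
      conv_lhs => rw [hGh.spectral_theorem, Unitary.conjStarAlgAut_apply]
      rw [← mulVec_mulVec, ← mulVec_mulVec, dotProduct_mulVec, hstar, ← hc]
      simp only [dotProduct, mulVec, diagonal_apply, Function.comp_apply, ite_mul, zero_mul,
        Finset.sum_ite_eq, Finset.mem_univ, if_true]
      exact Finset.sum_congr rfl fun i _ => by simp [dotProduct]; ring
    have hq3 : ∑ i, (c i)^2 = ((d^2 : ℕ) : ℝ) := by
      have h1 : ∑ i, (c i)^2 = c ⬝ᵥ c := by simp [dotProduct, sq]
      have h2 : c ⬝ᵥ c = w ⬝ᵥ w := by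
        nth_rewrite 2 [← hstar]
        rw [hc, dotProduct_mulVec, vecMul_vecMul, hUU', vecMul_one]
      rw [h1, h2]
      simp [dotProduct, hw, Finset.sum_const, Finset.card_univ, Fintype.card_fin, nsmul_eq_mul]
    have hd2 : (0:ℝ) < ((d^2 : ℕ) : ℝ) := Nat.cast_pos.mpr (pow_pos (Nat.pos_of_ne_zero (NeZero.ne d)) 2)
    have hfin : (d:ℝ)⁻¹ * ((d^2:ℕ) : ℝ) ≤ s * ((d^2:ℕ) : ℝ) := by
      calc (d:ℝ)⁻¹ * ((d^2:ℕ):ℝ) = ((d^2:ℕ):ℝ) * (d:ℝ)⁻¹ := by ring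
      _ = ∑ i, hGh.eigenvalues i * (c i)^2 := by rw [← hq1, hq2]
      _ ≤ ∑ i, s * (c i)^2 := Finset.sum_le_sum fun i _ =>
          mul_le_mul_of_nonneg_right (hls i) (sq_nonneg _)
      _ = s * ((d^2:ℕ):ℝ) := by rw [← Finset.mul_sum, hq3]
    exact le_of_mul_le_mul_right hfin hd2
  · have h2 : ∀ i, G i i ≤ (d:ℝ)⁻¹^2 := fun i => by
      rw [hG]
      calc ((E i * E i).trace).re ≤ ((E i).trace).re^2 := psd_trace_sq_le (hEpsd i)
      _ = (d:ℝ)⁻¹^2 := by rw [hEunb i, hre]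
    calc G.trace = ∑ i, G i i := rfl
    _ ≤ ∑ i, (d:ℝ)⁻¹^2 := Finset.sum_le_sum fun i _ => h2 i
    _ = ((d^2:ℕ):ℝ) * (d:ℝ)⁻¹^2 := by
        simp [Finset.sum_const, Finset.card_univ, Fintype.card_fin, nsmul_eq_mul]
    _ = 1 := by
        push_cast
        field_simp
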